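/- Let X be a topological space, F a presheaf of abelian groups on X, and let (A_a)_{a ∈ I_A} and (B_b)_{b ∈ I_B} be two families of open sets of X. Write Z(𝒜) for the group of compatible families (σ_a)_a ∈ ∏_a F(A_a) (those with σ_a|_{A_a ∩ A_{a'}} = σ_{a'}|_{A_a ∩ A_{a'}} for all a, a'), similarly Z(ℬ) ⊆ ∏_b F(B_b), and Z(𝒰) for the group of compatible families over the combined family indexed by I_A ⊕ I_B (agreement required on all pairwise intersections, including the cross intersections A_a ∩ B_b). Then the map Z(𝒰) → Z(𝒜) × Z(ℬ) splitting a combined family into its two halves is an injective group homomorphism, and its range is exactly the kernel of the map Z(𝒜) × Z(ℬ) → ∏_{(a,b) ∈ I_A × I_B} F(A_a ∩ B_b) sending (σ^A, σ^B) to the family (a,b) ↦ σ^B_b|_{A_a ∩ B_b} − σ^A_a|_{A_a ∩ B_b}. That is, the sequence 0 → Ȟ⁰(𝒰, F) → Ȟ⁰(𝒜, F) ⊕ Ȟ⁰(ℬ, F) → ∏_{a,b} F(A_a ∩ B_b) is exact. (Paper: Theorem 5.3, the degree-0 portion of the Mayer–Vietoris exact sequence for a cover decomposed into sub-covers 𝒜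 and ℬ.) -/

import Mathlib

open CategoryTheory Opposite TopologicalSpace

/-- The group `Ȟ⁰` of compatible families over a family of opens `(U_i)`:
those `(σ_i)_i ∈ ∏ i, F(U_i)` with `σ_i|_{U_i ∩ U_j} = σ_j|_{U_i ∩ U_j}` for all
`i, j`. -/
def compatFamilies {X : TopCat} (F : TopCat.Presheaf AddCommGrpCat X) {ι : Type*}
    (U : ι → Opens X) : AddSubgroup (∀ i, F.obj (op (U i))) where
  carrier := {σ | ∀ i j,
    F.map (homOfLE (inf_le_left : U i ⊓ U j ≤ U i)).op (σ i)
      = F.map (homOfLE (inf_le_right : U i ⊓ U j ≤ U j)).op (σ j)}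
  zero_mem' := by intro i j; simp
  add_mem' {a b} ha hb := by intro i j; simp only [Pi.add_apply, map_add, ha i j, hb i j]
  neg_mem' {a} ha := by intro i j; simp only [Pi.neg_apply, map_neg, ha i j]

/-- Splitting a compatible family over the combined cover (indexed by `ιA ⊕ ιB`)
into its `𝒜`-half and its `ℬ`-half. -/
def splitFamilies {X : TopCat} (F : TopCat.Presheaf AddCommGrpCat X)
    {ιA ιB : Type*} (A : ιA → Opens X) (B : ιB → Opens X) :
    compatFamilies F (Sum.elim A B) →+ compatFamilies F A × compatFamilies F B where
  toFun σ :=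
    (⟨fun a => σ.1 (Sum.inl a), fun a a' => σ.2 (Sum.inl a) (Sum.inl a')⟩,
     ⟨fun b => σ.1 (Sum.inr b), fun b b' => σ.2 (Sum.inr b) (Sum.inr b')⟩)
  map_zero' := rfl
  map_add' a b := rfl

/-- The cross-difference map `Ȟ⁰(𝒜) ⊕ Ȟ⁰(ℬ) → ∏_{(a,b)} F(A_a ∩ B_b)`,
`(σᴬ, σᴮ) ↦ ((a,b) ↦ σᴮ_b|_{A_a ∩ B_b} − σᴬ_a|_{A_a ∩ B_b})`. -/
def crossDelta {X : TopCat} (F : TopCat.Presheaf AddCommGrpCat X)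
    {ιA ιB : Type*} (A : ιA → Opens X) (B : ιB → Opens X) :
    compatFamilies F A × compatFamilies F B →+
      ∀ p : ιA × ιB, F.obj (op (A p.1 ⊓ B p.2)) where
  toFun σ := fun p =>
    F.map (homOfLE (inf_le_right : A p.1 ⊓ B p.2 ≤ B p.2)).op (σ.2.1 p.2)
      - F.map (homOfLE (inf_le_left : A p.1 ⊓ B p.2 ≤ A p.1)).op (σ.1.1 p.1)
  map_zero' := by funext p; simp
  map_add' a b := by funext p; simp; abel

/-- **Degree-0 Mayer–Vietoris** (Paper: Theorem 5.3). For two families of opens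
`𝒜 = (A_a)` and `ℬ = (B_b)` and the combined family `𝒰` indexed by `ιA ⊕ ιB`,
the splitting map `Ȟ⁰(𝒰, F) → Ȟ⁰(𝒜, F) ⊕ Ȟ⁰(ℬ, F)` is an injective group
homomorphism whose range is exactly the kernel of the cross-difference map
into `∏_{(a,b)} F(A_a ∩ B_b)`: the sequence
`0 → Ȟ⁰(𝒰, F) → Ȟ⁰(𝒜, F) ⊕ Ȟ⁰(ℬ, F) → ∏_{a,b} F(A_a ∩ B_b)` is exact. -/
theorem mayerVietoris_degree_zero {X : TopCat} (F : TopCat.Presheaf AddCommGrpCat X)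
    {ιA ιB : Type*} (A : ιA → Opens X) (B : ιB → Opens X) :
    Function.Injective (splitFamilies F A B)
    ∧ Set.range (splitFamilies F A B) = {x | crossDelta F A B x = 0} := by
  constructor
  · intro σ τ h
    have h1 := congrArg (fun x => x.1.1) h
    have h2 := congrArg (fun x => x.2.1) h
    ext i
    cases i with
    | inl a => exact congrFun h1 a
    | inr b => exact congrFun h2 b
  · ext x
    simp only [Set.mem_range, Set.mem_setOf_eq]
    constructor
    · rintro ⟨σ, rfl⟩
      funext p
      obtain ⟨a, b⟩ := p
      exact sub_eq_zero.mpr (σ.2 (Sum.inl a) (Sum.inr b)).symm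
    · intro hx
      have key : ∀ a b,
          F.map (homOfLE (inf_le_right : A a ⊓ B b ≤ B b)).op (x.2.1 b)
            = F.map (homOfLE (inf_le_left : A a ⊓ B b ≤ A a)).op (x.1.1 a) := by
        intro a b
        have := congrFun hx (a, b)
        simpa [crossDelta, sub_eq_zero] using this
      refine ⟨⟨fun i => match i with | .inl a => x.1.1 a | .inr b => x.2.1 b, ?_⟩, ?_⟩
      · intro i j
        cases i with
        | inl a =>
          cases j with
          | inl a' => exact x.1.2 a a'
          | inr b => exact (key a b).symm
        | inr b =>
          cases j with
          | inl a =>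
            have h1 : B b ⊓ A a ≤ A a ⊓ B b := by
              simp [inf_comm]
            have e1 : F.map (homOfLE (inf_le_left : B b ⊓ A a ≤ B b)).op (x.2.1 b)
                = F.map (homOfLE h1).op
                    (F.map (homOfLE (inf_le_right : A a ⊓ B b ≤ B b)).op (x.2.1 b)) := by
              rw [← CategoryTheory.comp_apply, ← F.map_comp, ← op_comp, homOfLE_comp]
            have e2 : F.map (homOfLE (inf_le_right : B b ⊓ A a ≤ A a)).op (x.1.1 a)
                = F.map (homOfLE h1).op
                    (F.map (homOfLE (inf_le_left : A a ⊓ B b ≤ A a)).op (x.1.1 a)) := by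
              rw [← CategoryTheory.comp_apply, ← F.map_comp, ← op_comp, homOfLE_comp]
            show F.map (homOfLE (inf_le_left : B b ⊓ A a ≤ B b)).op (x.2.1 b)
                = F.map (homOfLE (inf_le_right : B b ⊓ A a ≤ A a)).op (x.1.1 a)
            exact e1.trans ((congrArg (F.map (homOfLE h1).op) (key a b)).trans e2.symm)
          | inr b' => exact x.2.2 b b'
      · rfl
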